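/- Let r̄ be a real number with 0 ≤ r̄ < 1 and let n ∈ ℤ. Then the absolute value of (1/2π)·∫_{−π}^{π} (1 − r̄ cos β)·e^{−inβ}/(1 + r̄² − 2r̄ cos β) dβ equals 1 when n = 0, and equals r̄^{|n|}/2 when n ≠ 0. -/

import Mathlib

open Complex intervalIntegral

noncomputable def g5F (r : ℝ) (n : ℤ) (k : ℕ) : C(ℝ, ℂ) :=
  ⟨fun β => (r : ℂ) ^ k / 2 *
      (Complex.exp ((((k : ℤ) - n : ℤ) : ℂ) * Complex.I * β) +
        Complex.exp (((-((k : ℤ) + n) : ℤ) : ℂ) * Complex.I * β)), by fun_prop⟩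

lemma integral_exp_int (m : ℤ) :
    (∫ β in (-Real.pi)..Real.pi, Complex.exp ((m : ℂ) * Complex.I * β))
      = if m = 0 then (2 * Real.pi : ℂ) else 0 := by
  rcases eq_or_ne m 0 with hm | hm
  · simp [hm, intervalIntegral.integral_const, sub_neg_eq_add]
    ring
  · have hc : (m : ℂ) * Complex.I ≠ 0 := by
      simp [Complex.ext_iff, hm]
    rw [if_neg hm, integral_exp_mul_complex hc]
    have h2 : Complex.exp ((m : ℂ) * (2 * Real.pi * Complex.I)) = 1 :=
      Complex.exp_int_mul_two_pi_mul_I m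
    have h1 : Complex.exp ((m : ℂ) * Complex.I * (Real.pi : ℂ))
        = Complex.exp ((m : ℂ) * Complex.I * ((-Real.pi : ℝ) : ℂ)) := by
      calc Complex.exp ((m : ℂ) * Complex.I * (Real.pi : ℂ))
          = Complex.exp ((m : ℂ) * Complex.I * ((-Real.pi : ℝ) : ℂ)) *
              Complex.exp ((m : ℂ) * (2 * Real.pi * Complex.I)) := by
            rw [← Complex.exp_add]; push_cast; ring_nf
        _ = _ := by rw [h2, mul_one]
    rw [h1, sub_self, zero_div]

lemma g5_hasSum (r : ℝ) (hr0 : 0 ≤ r) (hr1 : r < 1) (n : ℤ) (β : ℝ) :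
    HasSum (fun k => g5F r n k β)
      (((1 - r * Real.cos β : ℝ) : ℂ) *
          Complex.exp (-Complex.I * (n : ℂ) * (β : ℂ)) /
        ((1 + r ^ 2 - 2 * r * Real.cos β : ℝ) : ℂ)) := by
  have habs1 : ‖(r : ℂ) * Complex.exp (Complex.I * β)‖ < 1 := by
    rw [norm_mul, Complex.norm_exp,
      Complex.norm_real, Real.norm_of_nonneg hr0]
    simpa [Complex.mul_re] using hr1
  have habs2 : ‖(r : ℂ) * Complex.exp (-(Complex.I * β))‖ < 1 := by
    rw [norm_mul, Complex.norm_exp,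
      Complex.norm_real, Real.norm_of_nonneg hr0]
    simpa [Complex.mul_re] using hr1
  have h1 : (1 : ℂ) - r * Complex.exp (Complex.I * β) ≠ 0 := by
    intro h
    have h' : (1 : ℂ) = r * Complex.exp (Complex.I * β) := sub_eq_zero.mp h
    rw [← h'] at habs1
    exact absurd (by simpa using habs1) (lt_irrefl (1 : ℝ))
  have h2 : (1 : ℂ) - r * Complex.exp (-(Complex.I * β)) ≠ 0 := by
    intro h
    have h' : (1 : ℂ) = r * Complex.exp (-(Complex.I * β)) := sub_eq_zero.mp h
    rw [← h'] at habs2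
    exact absurd (by simpa using habs2) (lt_irrefl (1 : ℝ))
  have hs1 := (hasSum_geometric_of_norm_lt_one habs1).mul_left
    (Complex.exp (-Complex.I * (n : ℂ) * (β : ℂ)) / 2)
  have hs2 := (hasSum_geometric_of_norm_lt_one habs2).mul_left
    (Complex.exp (-Complex.I * (n : ℂ) * (β : ℂ)) / 2)
  have hs := hs1.add hs2
  have hterm : ∀ k : ℕ, g5F r n k β =
      Complex.exp (-Complex.I * (n : ℂ) * (β : ℂ)) / 2 * ((r : ℂ) * Complex.exp (Complex.I * β)) ^ k +
      Complex.exp (-Complex.I * (n : ℂ) * (β : ℂ)) / 2 * ((r : ℂ) * Complex.exp (-(Complex.I * β))) ^ k := by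
    intro k
    have e1 : Complex.exp ((((k : ℤ) - n : ℤ) : ℂ) * Complex.I * β)
        = Complex.exp (-Complex.I * (n : ℂ) * (β : ℂ)) * Complex.exp (Complex.I * β) ^ k := by
      rw [← Complex.exp_nat_mul, ← Complex.exp_add]; congr 1; push_cast; ring
    have e2 : Complex.exp (((-((k : ℤ) + n) : ℤ) : ℂ) * Complex.I * β)
        = Complex.exp (-Complex.I * (n : ℂ) * (β : ℂ)) * Complex.exp (-(Complex.I * β)) ^ k := by
      rw [← Complex.exp_nat_mul, ← Complex.exp_add]; congr 1; push_cast; ring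
    simp only [g5F, ContinuousMap.coe_mk, e1, e2]
    ring
  have he : Complex.exp (Complex.I * β) + Complex.exp (-(Complex.I * β))
      = 2 * Complex.cos (β : ℂ) := by
    rw [show (-((Complex.I : ℂ) * (β : ℂ))) = ((-β : ℝ) : ℂ) * Complex.I by push_cast; ring,
      show (Complex.I * (β : ℂ)) = (β : ℂ) * Complex.I by ring,
      Complex.exp_mul_I, Complex.exp_mul_I, Complex.ofReal_neg,
      Complex.cos_neg, Complex.sin_neg]
    ring
  have hm : Complex.exp (Complex.I * β) * Complex.exp (-(Complex.I * β)) = 1 := by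
    rw [← Complex.exp_add]; simp
  have hdfac : ((1 + r ^ 2 - 2 * r * Real.cos β : ℝ) : ℂ)
      = (1 - r * Complex.exp (Complex.I * β)) * (1 - r * Complex.exp (-(Complex.I * β))) := by
    push_cast
    linear_combination (r : ℂ) * he - (r : ℂ) ^ 2 * hm
  have hval0 : ((1 - r * Real.cos β : ℝ) : ℂ) /
        ((1 + r ^ 2 - 2 * r * Real.cos β : ℝ) : ℂ)
      = (1 / 2) * (1 - (r : ℂ) * Complex.exp (Complex.I * β))⁻¹ +
        (1 / 2) * (1 - (r : ℂ) * Complex.exp (-(Complex.I * β)))⁻¹ := by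
    rw [hdfac]
    have hnum : ((1 - r * Real.cos β : ℝ) : ℂ) = ((1 - (r : ℂ) * Complex.exp (Complex.I * β)) +
        (1 - (r : ℂ) * Complex.exp (-(Complex.I * β)))) / 2 := by
      push_cast
      linear_combination ((r : ℂ) / 2) * he
    rw [hnum]
    field_simp
    ring
  have hval : ((1 - r * Real.cos β : ℝ) : ℂ) *
          Complex.exp (-Complex.I * (n : ℂ) * (β : ℂ)) /
        ((1 + r ^ 2 - 2 * r * Real.cos β : ℝ) : ℂ)
      = Complex.exp (-Complex.I * (n : ℂ) * (β : ℂ)) / 2 *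
          (1 - (r : ℂ) * Complex.exp (Complex.I * β))⁻¹ +
        Complex.exp (-Complex.I * (n : ℂ) * (β : ℂ)) / 2 *
          (1 - (r : ℂ) * Complex.exp (-(Complex.I * β)))⁻¹ := by
    calc ((1 - r * Real.cos β : ℝ) : ℂ) *
          Complex.exp (-Complex.I * (n : ℂ) * (β : ℂ)) /
        ((1 + r ^ 2 - 2 * r * Real.cos β : ℝ) : ℂ)
        = Complex.exp (-Complex.I * (n : ℂ) * (β : ℂ)) *
            (((1 - r * Real.cos β : ℝ) : ℂ) /
              ((1 + r ^ 2 - 2 * r * Real.cos β : ℝ) : ℂ)) := by ring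
      _ = Complex.exp (-Complex.I * (n : ℂ) * (β : ℂ)) *
            ((1 / 2) * (1 - (r : ℂ) * Complex.exp (Complex.I * β))⁻¹ +
              (1 / 2) * (1 - (r : ℂ) * Complex.exp (-(Complex.I * β)))⁻¹) := by rw [hval0]
      _ = _ := by ring
  rw [hval, show (fun k : ℕ => (g5F r n k : ℝ → ℂ) β) = _ from funext hterm]
  exact hs


/-- The absolute value of the `n`-th Fourier coefficient of
`g₅(β) = (1 − r̄ cos β)/(1 + r̄² − 2 r̄ cos β)`, for `0 ≤ r̄ < 1`, equals `1`
when `n = 0` and `r̄^{|n|}/2` when `n ≠ 0`. -/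
theorem fourier_coeff_g5_abs (r : ℝ) (hr0 : 0 ≤ r) (hr1 : r < 1) (n : ℤ) :
    Norm.norm
        ((1 / (2 * (Real.pi : ℂ))) *
          ∫ β in (-Real.pi)..Real.pi,
            ((1 - r * Real.cos β : ℝ) : ℂ) *
              Complex.exp (-Complex.I * (n : ℂ) * (β : ℂ)) /
                ((1 + r ^ 2 - 2 * r * Real.cos β : ℝ) : ℂ))
      = if n = 0 then 1 else r ^ n.natAbs / 2 := by

  have hπ : (Real.pi : ℂ) ≠ 0 := Complex.ofReal_ne_zero.mpr Real.pi_ne_zero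
  have hexp : ∀ (m : ℤ) (β : ℝ), ‖Complex.exp ((m : ℂ) * Complex.I * β)‖ = 1 := by
    intro m β
    rw [Complex.norm_exp]
    simp [Complex.mul_re, Complex.mul_im]
  have hsum : Summable (fun k : ℕ => ‖(g5F r n k).restrict
      (⟨Set.uIcc (-Real.pi) Real.pi, isCompact_uIcc⟩ : TopologicalSpace.Compacts ℝ)‖) := by
    apply Summable.of_nonneg_of_le (fun k => norm_nonneg _) _
      (summable_geometric_of_lt_one hr0 hr1)
    intro k
    rw [ContinuousMap.norm_le _ (pow_nonneg hr0 k)]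
    intro x
    rw [ContinuousMap.restrict_apply]
    simp only [g5F, ContinuousMap.coe_mk]
    have ha : ‖(r : ℂ) ^ k / 2‖ = r ^ k / 2 := by
      rw [norm_div, norm_pow]
      simp [Complex.norm_real, _root_.abs_of_nonneg hr0]
    calc ‖(r : ℂ) ^ k / 2 *
          (Complex.exp ((((k : ℤ) - n : ℤ) : ℂ) * Complex.I * x.1) +
            Complex.exp (((-((k : ℤ) + n) : ℤ) : ℂ) * Complex.I * x.1))‖
        = ‖(r : ℂ) ^ k / 2‖ * ‖Complex.exp ((((k : ℤ) - n : ℤ) : ℂ) * Complex.I * x.1) +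
            Complex.exp (((-((k : ℤ) + n) : ℤ) : ℂ) * Complex.I * x.1)‖ := norm_mul _ _
      _ ≤ (r ^ k / 2) * 2 := by
          rw [ha]
          gcongr
          refine le_trans (norm_add_le _ _) ?_
          rw [hexp, hexp]; norm_num
      _ = r ^ k := by ring
  have hint : (∫ β in (-Real.pi)..Real.pi,
        ((1 - r * Real.cos β : ℝ) : ℂ) *
          Complex.exp (-Complex.I * (n : ℂ) * (β : ℂ)) /
            ((1 + r ^ 2 - 2 * r * Real.cos β : ℝ) : ℂ))
      = ∑' k : ℕ, ∫ β in (-Real.pi)..Real.pi, (g5F r n k) β := by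
    rw [intervalIntegral.tsum_intervalIntegral_eq_of_summable_norm hsum]
    exact intervalIntegral.integral_congr fun β _ => ((g5_hasSum r hr0 hr1 n β).tsum_eq).symm
  have hIk : ∀ k : ℕ, (∫ β in (-Real.pi)..Real.pi, (g5F r n k) β)
      = (r : ℂ) ^ k / 2 * ((if (k : ℤ) - n = 0 then (2 * Real.pi : ℂ) else 0) +
          (if -((k : ℤ) + n) = 0 then (2 * Real.pi : ℂ) else 0)) := by
    intro k
    have hi1 : IntervalIntegrable
        (fun β : ℝ => Complex.exp ((((k : ℤ) - n : ℤ) : ℂ) * Complex.I * β))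
        MeasureTheory.volume (-Real.pi) Real.pi :=
      Continuous.intervalIntegrable (by fun_prop) _ _
    have hi2 : IntervalIntegrable
        (fun β : ℝ => Complex.exp (((-((k : ℤ) + n) : ℤ) : ℂ) * Complex.I * β))
        MeasureTheory.volume (-Real.pi) Real.pi :=
      Continuous.intervalIntegrable (by fun_prop) _ _
    simp only [g5F, ContinuousMap.coe_mk]
    rw [intervalIntegral.integral_const_mul, intervalIntegral.integral_add hi1 hi2,
      integral_exp_int, integral_exp_int]
  rw [hint]
  rcases eq_or_ne n 0 with hn | hn
  · subst hn
    rw [if_pos rfl]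
    have htsum : (∑' k : ℕ, ∫ β in (-Real.pi)..Real.pi, (g5F r 0 k) β) = (2 * Real.pi : ℂ) := by
      rw [tsum_eq_single 0]
      · rw [hIk 0]
        norm_num
        ring
      · intro k hk
        rw [hIk k]
        have h1 : ¬((k : ℤ) - 0 = 0) := by omega
        have h2 : ¬(-((k : ℤ) + 0) = 0) := by omega
        rw [if_neg h1, if_neg h2]
        ring
    rw [htsum, show (1 / (2 * (Real.pi : ℂ))) * (2 * Real.pi) = 1 by field_simp]
    simp
  · rw [if_neg hn]
    have htsum : (∑' k : ℕ, ∫ β in (-Real.pi)..Real.pi, (g5F r n k) β)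
        = (r : ℂ) ^ n.natAbs * Real.pi := by
      rw [tsum_eq_single n.natAbs]
      · rw [hIk n.natAbs]
        have : ((if ((n.natAbs : ℤ) - n = 0) then (2 * Real.pi : ℂ) else 0) +
            (if -((n.natAbs : ℤ) + n) = 0 then (2 * Real.pi : ℂ) else 0)) = 2 * Real.pi := by
          rcases lt_or_gt_of_ne hn with h | h
          · rw [if_neg (by omega), if_pos (by omega)]; ring
          · rw [if_pos (by omega), if_neg (by omega)]; ring
        rw [this]
        ring
      · intro k hk
        rw [hIk k]
        have h1 : ¬((k : ℤ) - n = 0) := by omega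
        have h2 : ¬(-((k : ℤ) + n) = 0) := by omega
        rw [if_neg h1, if_neg h2]
        ring
    rw [htsum, show (1 / (2 * (Real.pi : ℂ))) * ((r : ℂ) ^ n.natAbs * Real.pi)
      = ((r ^ n.natAbs / 2 : ℝ) : ℂ) by push_cast; field_simp]
    rw [Complex.norm_real, Real.norm_of_nonneg (by positivity)]
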